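/- arXiv:2207.02580 — 2 statements merged into one kernel-verified Lean document; each statement's English description precedes it below -/
import Mathlib

section
/- (Generalised Phase Kick-Back, Lemma 2.1.) Let f : 𝔽₂ⁿ → 𝔽₂ᵐ be a Boolean function and let U_f be the linear operator on ℂ-valued functions on 𝔽₂ⁿ × 𝔽₂ᵐ induced by the permutation (x, z) ↦ (x, z ⊕ f(x)) of the computational basis (i.e. (U_f g)(x, z) = g(x, z ⊕ f(x))). For y ∈ 𝔽₂ᵐ, let |γ_y⟩ be the vector on 𝔽₂ᵐ with components γ_y(z) = (1/√(2ᵐ))·(−1)^(y·z). Then for every x ∈ 𝔽₂ⁿ and y ∈ 𝔽₂ᵐ, the vector v given by v(x', z) = (if x' = x then 1 else 0)·(1/√(2ᵐ))·(−1)^(y·z) (that is, |x⟩ ⊗ |γ_y⟩) is an eigenvector of U_f with eigenvalue (−1)^(y·f(x)): U_f v = (−1)^(y·f(x)) · v. -/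
/-- The sign `(−1)^a ∈ ℂ` associated to a bit `a ∈ 𝔽₂`. -/
noncomputable def sgn (a : ZMod 2) : ℂ := (-1 : ℂ) ^ a.val

/-- The pairing `y·z = Σᵢ yᵢ·zᵢ ∈ 𝔽₂` of two binary strings. -/
def dotp {m : ℕ} (y z : Fin m → ZMod 2) : ZMod 2 := ∑ i, y i * z i

/-- The operator `U_f` on ℂ-valued functions on `𝔽₂ⁿ × 𝔽₂ᵐ`, induced by the
permutation `(x, z) ↦ (x, z ⊕ f(x))` of the computational basis:
`(U_f g)(x, z) = g(x, z ⊕ f(x))`. -/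
def Uf {n m : ℕ} (f : (Fin n → ZMod 2) → (Fin m → ZMod 2))
    (g : (Fin n → ZMod 2) × (Fin m → ZMod 2) → ℂ) :
    (Fin n → ZMod 2) × (Fin m → ZMod 2) → ℂ :=
  fun p => g (p.1, p.2 + f p.1)

lemma sgn_add (a b : ZMod 2) : sgn (a + b) = sgn a * sgn b := by
  rcases (by decide : ∀ c : ZMod 2, c = 0 ∨ c = 1) a with rfl | rfl <;> rcases (by decide : ∀ c : ZMod 2, c = 0 ∨ c = 1) b with rfl | rfl <;> norm_num [sgn, show ((1:ZMod 2)+1).val = 0 from rfl, show (2:ZMod 2).val = 0 from rfl, show (1:ZMod 2).val = 1 from rfl]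

lemma dotp_add_right {m : ℕ} (y z w : Fin m → ZMod 2) :
    dotp y (z + w) = dotp y z + dotp y w := by
  simp [dotp, mul_add, Finset.sum_add_distrib]

/-- Generalised Phase Kick-Back (Lemma 2.1): for every `x ∈ 𝔽₂ⁿ` and
`y ∈ 𝔽₂ᵐ`, the vector `|x⟩ ⊗ |γ_y⟩` is an eigenvector of `U_f` with
eigenvalue `(−1)^(y·f(x))`. -/
theorem generalised_phase_kick_back {n m : ℕ}
    (f : (Fin n → ZMod 2) → (Fin m → ZMod 2))
    (x : Fin n → ZMod 2) (y : Fin m → ZMod 2)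
    (v : (Fin n → ZMod 2) × (Fin m → ZMod 2) → ℂ)
    (hv : ∀ x' z, v (x', z) =
      (if x' = x then 1 else 0) *
        (((Real.sqrt (2 ^ m) : ℝ)⁻¹ : ℂ) * sgn (dotp y z))) :
    Uf f v = fun p => sgn (dotp y (f x)) * v p := by
  funext p
  obtain ⟨x', z⟩ := p
  simp only [Uf, hv]
  by_cases h : x' = x
  · subst h
    rw [dotp_add_right, sgn_add]
    ring
  · simp [h]
end

section
/- (Correctness of the Deutsch–Jozsa algorithm.) Let n ≥ 1 and let f : 𝔽₂ⁿ → 𝔽₂ satisfy the promise that either f is constant, or f is balanced (f takes the value 0 on exactly 2^(n−1) inputs and the value 1 on exactly 2^(n−1) inputs). Then the amplitude (1/2ⁿ)·Σ_{x ∈ 𝔽₂ⁿ} (−1)^(f(x)) of |0⟩ₙ in the final state of the Deutsch–Jozsa algorithm equals ±1 if f is constant and 0 if f is balanced; in particular f is constant if and only if Σ_{x ∈ 𝔽₂ⁿ} (−1)^(f(x)) ≠ 0. -/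
lemma sgn_eq (a : ZMod 2) : sgn a = if a = 0 then 1 else -1 := by
  rcases (show ∀ b : ZMod 2, b = 0 ∨ b = 1 by decide) a with rfl | rfl <;> simp [sgn, ZMod.val_one]

lemma sum_sgn {n : ℕ} (f : (Fin n → ZMod 2) → ZMod 2) :
    (∑ x : Fin n → ZMod 2, sgn (f x)) =
      ((Finset.univ.filter (fun x : Fin n → ZMod 2 => f x = 0)).card : ℂ)
      - ((Finset.univ.filter (fun x : Fin n → ZMod 2 => f x = 1)).card : ℂ) := by
  have h1 : (Finset.univ.filter (fun x : Fin n → ZMod 2 => ¬ f x = 0))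
      = Finset.univ.filter (fun x : Fin n → ZMod 2 => f x = 1) := by
    apply Finset.filter_congr
    intro x _
    generalize f x = a
    rcases (show ∀ b : ZMod 2, b = 0 ∨ b = 1 by decide) a with rfl | rfl <;> simp
  simp only [sgn_eq]
  rw [Finset.sum_ite, Finset.sum_const, Finset.sum_const, h1]
  simp [nsmul_eq_mul]
  ring

/-- Correctness of the Deutsch–Jozsa algorithm: under the promise that `f` is
constant or balanced, the amplitude `(1/2ⁿ)·Σ_x (−1)^(f(x))` of `|0⟩ₙ` in the
final state is `±1` if `f` is constant and `0` if `f` is balanced; in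
particular `f` is constant iff `Σ_x (−1)^(f(x)) ≠ 0`. -/
theorem deutsch_jozsa {n : ℕ} (hn : 1 ≤ n)
    (f : (Fin n → ZMod 2) → ZMod 2)
    (hprom : (∃ c, ∀ x, f x = c) ∨
      ((Finset.univ.filter (fun x : Fin n → ZMod 2 => f x = 0)).card = 2 ^ (n - 1) ∧
       (Finset.univ.filter (fun x : Fin n → ZMod 2 => f x = 1)).card = 2 ^ (n - 1))) :
    ((∃ c, ∀ x, f x = c) →
      ((2 : ℂ) ^ n)⁻¹ * (∑ x : Fin n → ZMod 2, sgn (f x)) = 1 ∨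
      ((2 : ℂ) ^ n)⁻¹ * (∑ x : Fin n → ZMod 2, sgn (f x)) = -1) ∧
    (((Finset.univ.filter (fun x : Fin n → ZMod 2 => f x = 0)).card = 2 ^ (n - 1) ∧
      (Finset.univ.filter (fun x : Fin n → ZMod 2 => f x = 1)).card = 2 ^ (n - 1)) →
      ((2 : ℂ) ^ n)⁻¹ * (∑ x : Fin n → ZMod 2, sgn (f x)) = 0) ∧
    ((∃ c, ∀ x, f x = c) ↔ (∑ x : Fin n → ZMod 2, sgn (f x)) ≠ 0) := by
  have h2n : ((2 : ℂ) ^ n) ≠ 0 := pow_ne_zero _ two_ne_zero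
  have hcard : ((Finset.univ : Finset (Fin n → ZMod 2)).card : ℂ) = 2 ^ n := by
    simp [Finset.card_univ]
  have hconst : (∃ c, ∀ x, f x = c) →
      ((2 : ℂ) ^ n)⁻¹ * (∑ x : Fin n → ZMod 2, sgn (f x)) = 1 ∨
      ((2 : ℂ) ^ n)⁻¹ * (∑ x : Fin n → ZMod 2, sgn (f x)) = -1 := by
    rintro ⟨c, hc⟩
    rw [sum_sgn]
    have hc2 : ∀ a : ZMod 2, a = 0 ∨ a = 1 := by decide
    rcases hc2 c with rfl | rfl
    · left
      have h0 : Finset.univ.filter (fun x : Fin n → ZMod 2 => f x = 0) = Finset.univ := by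
        apply Finset.filter_true_of_mem; intro x _; exact hc x
      have h1 : Finset.univ.filter (fun x : Fin n → ZMod 2 => f x = 1) = ∅ := by
        apply Finset.filter_false_of_mem; intro x _; rw [hc x]; decide
      rw [h0, h1]
      simp only [Finset.card_empty, Nat.cast_zero, sub_zero, hcard]
      field_simp
    · right
      have h0 : Finset.univ.filter (fun x : Fin n → ZMod 2 => f x = 0) = ∅ := by
        apply Finset.filter_false_of_mem; intro x _; rw [hc x]; decide
      have h1 : Finset.univ.filter (fun x : Fin n → ZMod 2 => f x = 1) = Finset.univ := by
        apply Finset.filter_true_of_mem; intro x _; exact hc x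
      rw [h0, h1]
      simp only [Finset.card_empty, Nat.cast_zero, zero_sub, hcard]
      field_simp
  have hbal : ((Finset.univ.filter (fun x : Fin n → ZMod 2 => f x = 0)).card = 2 ^ (n - 1) ∧
      (Finset.univ.filter (fun x : Fin n → ZMod 2 => f x = 1)).card = 2 ^ (n - 1)) →
      ((2 : ℂ) ^ n)⁻¹ * (∑ x : Fin n → ZMod 2, sgn (f x)) = 0 := by
    rintro ⟨h0, h1⟩
    rw [sum_sgn, h0, h1]
    simp
  refine ⟨hconst, hbal, ?_, ?_⟩
  · intro hc hzero
    rcases hconst hc with h | h <;> rw [hzero, mul_zero] at h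
    · exact one_ne_zero h.symm
    · norm_num at h
  · intro hne
    rcases hprom with h | h
    · exact h
    · exfalso
      apply hne
      rw [sum_sgn, h.1, h.2]
      ring
end
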